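/- Let α be a self-conjugate partition of n with exactly m ≥ 2 distinct part sizes r₁ > r₂ > ⋯ > r_m, where r₁ occurs k₁ times. If a partition β of n has a part x with max{2(r₂ − k₁), r₁ + r₂ − k₁} ≤ x ≤ 2(r₁ − k₁), then χ^α(β) = 0. -/

import Mathlib

open scoped Classical

/-- A function `α : ℕ → ℕ` (listing the parts, 0-indexed, weakly decreasing,
finitely supported) is a partition of `n`. -/
def IsPartitionFun (α : ℕ → ℕ) (n : ℕ) : Prop :=
  Antitone α ∧ (Function.support α).Finite ∧ ∑ᶠ i, α i = n

/-- A list of parts (weakly decreasing, positive) is a partition of `n`. -/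
def IsPartitionList (β : List ℕ) (n : ℕ) : Prop :=
  β.Pairwise (· ≥ ·) ∧ (∀ b ∈ β, 0 < b) ∧ β.sum = n

/-- The conjugate (transpose) partition: `conjPart α j` is the number of rows `i`
with `α i > j`, i.e. the length of column `j` (0-indexed). -/
noncomputable def conjPart (α : ℕ → ℕ) (j : ℕ) : ℕ :=
  Set.ncard {i | j < α i}

/-- Hook length at the (0-indexed) node `(i, j)`. -/
noncomputable def hookLen (α : ℕ → ℕ) (i j : ℕ) : ℕ :=
  (α i - j) + (conjPart α j - i) - 1

/-- Leg length at the (0-indexed) node `(i, j)`. -/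
noncomputable def legLen (α : ℕ → ℕ) (i j : ℕ) : ℕ :=
  conjPart α j - i - 1

/-- The partition obtained by removing the rim hook of the `(i,j)`-hook. -/
noncomputable def removeHook (α : ℕ → ℕ) (i j : ℕ) : ℕ → ℕ := fun t =>
  if t < i then α t
  else if t + 1 < conjPart α j then α (t + 1) - 1
  else if t + 1 = conjPart α j then j
  else α t

/-- The value `χ^α(β)` of the irreducible character of the symmetric group
indexed by the partition `α`, at the conjugacy class of cycle type `β`,
defined via the Murnaghan–Nakayama rule. -/
noncomputable def charValue (α : ℕ → ℕ) : List ℕ → ℤ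
  | [] => if ∀ i, α i = 0 then 1 else 0
  | b :: rest =>
      ∑ᶠ (i : ℕ), ∑ᶠ (j : ℕ),
        if j < α i ∧ hookLen α i j = b then
          (-1) ^ legLen α i j * charValue (removeHook α i j) rest
        else 0

/-- The degree of `χ^α`, i.e. its value on the identity `(1^n)`. -/
noncomputable def charDegree (α : ℕ → ℕ) (n : ℕ) : ℤ :=
  charValue α (List.replicate n 1)

lemma myfinsum_eq_zero {f : ℕ → ℤ} (h : ∀ i, f i = 0) : ∑ᶠ i, f i = 0 := by
  have : f = fun _ => 0 := funext h
  rw [this]; exact finsum_zero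

lemma dc_eq_Iio (S : Set ℕ) (hfin : S.Finite) (hdc : ∀ a b : ℕ, a ≤ b → b ∈ S → a ∈ S) :
    S = Set.Iio S.ncard := by
  have hne : Sᶜ.Nonempty := (hfin.infinite_compl).nonempty
  have hm : sInf Sᶜ ∈ Sᶜ := Nat.sInf_mem hne
  have hS : S = Set.Iio (sInf Sᶜ) := by
    ext k
    constructor
    · intro hk
      by_contra hkm
      exact hm (hdc _ k (by simpa using hkm) hk)
    · intro hk
      by_contra hk'
      have : sInf Sᶜ ≤ k := Nat.sInf_le hk'
      exact absurd this (by simpa using hk)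
  have hcard : (Set.Iio (sInf Sᶜ)).ncard = sInf Sᶜ := by
    rw [← Finset.coe_Iio, Set.ncard_coe_finset, Nat.card_Iio]
  rw [hS, hcard]

lemma conj_set (γ : ℕ → ℕ) (hA : Antitone γ) {N : ℕ} (hN : ∀ t, N ≤ t → γ t = 0) (j : ℕ) :
    {t : ℕ | j < γ t} = Set.Iio (conjPart γ j) ∧ conjPart γ j ≤ N := by
  have hsub : {t : ℕ | j < γ t} ⊆ Set.Iio N := by
    intro t ht
    by_contra h
    simp only [Set.mem_Iio, not_lt] at h
    have := hN t (by simpa using h)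
    simp only [Set.mem_setOf_eq, this] at ht
    omega
  have hfin : {t : ℕ | j < γ t}.Finite := Set.Finite.subset (Set.finite_Iio N) hsub
  have hdc : ∀ a b : ℕ, a ≤ b → b ∈ {t : ℕ | j < γ t} → a ∈ {t : ℕ | j < γ t} := by
    intro a b hab hb
    simp only [Set.mem_setOf_eq] at *
    exact lt_of_lt_of_le hb (hA hab)
  have hc : conjPart γ j = {t : ℕ | j < γ t}.ncard := rfl
  have heq : {t : ℕ | j < γ t} = Set.Iio (conjPart γ j) := by
    rw [hc]; exact dc_eq_Iio _ hfin hdc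
  refine ⟨heq, ?_⟩
  by_contra h
  push_neg at h
  have hmem : N ∈ Set.Iio (conjPart γ j) := h
  rw [← heq] at hmem
  simp only [Set.mem_setOf_eq, hN N le_rfl] at hmem
  omega

lemma lt_conj_iff (γ : ℕ → ℕ) (hA : Antitone γ) {N : ℕ} (hN : ∀ t, N ≤ t → γ t = 0)
    (j t : ℕ) : j < γ t ↔ t < conjPart γ j := by
  have heq := (conj_set γ hA hN j).1
  have := Set.ext_iff.mp heq t
  simpa using this

lemma ray_mem (γ : ℕ → ℕ) {N : ℕ} (hN : ∀ t, N ≤ t → γ t = 0) :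
    ∀ v : ℤ, v ≤ -(N : ℤ) → ∃ t : ℕ, (γ t : ℤ) - t = v := by
  intro v hv
  refine ⟨(-v).toNat, ?_⟩
  have h1 : (N : ℤ) ≤ -v := by omega
  have h2 : ((-v).toNat : ℤ) = -v := Int.toNat_of_nonneg (by omega)
  have h3 : N ≤ (-v).toNat := by omega
  rw [hN _ h3]
  omega

lemma hook_cast (γ : ℕ → ℕ) (hA : Antitone γ) {N : ℕ} (hN : ∀ t, N ≤ t → γ t = 0)
    {i j : ℕ} (hj : j < γ i) :
    (γ i : ℤ) - i - hookLen γ i j = (j : ℤ) - conjPart γ j + 1 := by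
  have hic : i < conjPart γ j := (lt_conj_iff γ hA hN j i).mp hj
  have h : hookLen γ i j = γ i - j + (conjPart γ j - i) - 1 := rfl
  omega

lemma gap_not_mem (γ : ℕ → ℕ) (hA : Antitone γ) {N : ℕ} (hN : ∀ t, N ≤ t → γ t = 0)
    (j : ℕ) : ∀ t : ℕ, (γ t : ℤ) - t ≠ (j : ℤ) - conjPart γ j + 1 := by
  intro t heq
  by_cases ht : t < conjPart γ j
  · have : j < γ t := (lt_conj_iff γ hA hN j t).mpr ht
    omega
  · have : ¬ j < γ t := fun h => ht ((lt_conj_iff γ hA hN j t).mp h)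
    push_neg at this
    omega

section RH
variable (γ : ℕ → ℕ) (hA : Antitone γ) {N : ℕ} (hN : ∀ t, N ≤ t → γ t = 0)
  {i j : ℕ} (hj : j < γ i)

include hA hN hj

lemma rh_vals :
    ∀ t : ℕ, (removeHook γ i j t : ℤ) - t = (j : ℤ) - conjPart γ j + 1 ∨
      ∃ s : ℕ, s ≠ i ∧ (removeHook γ i j t : ℤ) - t = (γ s : ℤ) - s := by
  intro t
  have hic : i < conjPart γ j := (lt_conj_iff γ hA hN j i).mp hj
  unfold removeHook
  by_cases h1 : t < i
  · exact Or.inr ⟨t, by omega, by rw [if_pos h1]⟩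
  · rw [if_neg h1]
    by_cases h2 : t + 1 < conjPart γ j
    · rw [if_pos h2]
      have hpos : j < γ (t+1) := (lt_conj_iff γ hA hN j (t+1)).mpr h2
      exact Or.inr ⟨t + 1, by omega, by push_cast; omega⟩
    · rw [if_neg h2]
      by_cases h3 : t + 1 = conjPart γ j
      · rw [if_pos h3]
        left; omega
      · rw [if_neg h3]
        exact Or.inr ⟨t, by omega, rfl⟩

lemma rh_old_vals :
    ∀ s : ℕ, s ≠ i → ∃ t : ℕ, (removeHook γ i j t : ℤ) - t = (γ s : ℤ) - s := by
  intro s hs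
  have hic : i < conjPart γ j := (lt_conj_iff γ hA hN j i).mp hj
  unfold removeHook
  by_cases h1 : s < i
  · exact ⟨s, by rw [if_pos h1]⟩
  · by_cases h2 : s < conjPart γ j
    · -- i < s < c, use t = s - 1
      have hsi : i < s := by omega
      refine ⟨s - 1, ?_⟩
      have e1 : ¬ (s - 1 < i) := by omega
      have e2 : s - 1 + 1 < conjPart γ j := by omega
      rw [if_neg e1, if_pos e2]
      have e3 : s - 1 + 1 = s := by omega
      rw [e3]
      have hpos : j < γ s := (lt_conj_iff γ hA hN j s).mpr h2
      omega
    · refine ⟨s, ?_⟩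
      have e1 : ¬ (s < i) := by omega
      have e2 : ¬ (s + 1 < conjPart γ j) := by omega
      have e3 : ¬ (s + 1 = conjPart γ j) := by omega
      rw [if_neg e1, if_neg e2, if_neg e3]

lemma rh_antitone : Antitone (removeHook γ i j) := by
  have hic : i < conjPart γ j := (lt_conj_iff γ hA hN j i).mp hj
  apply antitone_nat_of_succ_le
  intro t
  unfold removeHook
  by_cases h1 : t + 1 < i
  · rw [if_pos h1, if_pos (by omega : t < i)]
    exact hA (by omega)
  · rw [if_neg h1]
    by_cases h2 : t + 1 = i
    · -- t < i, so μ t = γ t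
      rw [if_pos (by omega : t < i)]
      by_cases h3 : t + 2 < conjPart γ j
      · rw [if_pos (by omega : t + 1 + 1 < conjPart γ j)]
        have := hA (by omega : t ≤ t + 1 + 1)
        omega
      · rw [if_neg (by omega : ¬ t + 1 + 1 < conjPart γ j)]
        by_cases h4 : t + 2 = conjPart γ j
        · rw [if_pos (by omega : t + 1 + 1 = conjPart γ j)]
          have := hA (by omega : t ≤ i)
          omega
        · omega
    · -- i ≤ t
      have hit : i ≤ t := by omega
      rw [if_neg (by omega : ¬ t < i)]
      by_cases h3 : t + 2 < conjPart γ j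
      · rw [if_pos (by omega : t + 1 + 1 < conjPart γ j), if_pos (by omega : t + 1 < conjPart γ j)]
        have := hA (by omega : t + 1 ≤ t + 1 + 1)
        omega
      · rw [if_neg (by omega : ¬ t + 1 + 1 < conjPart γ j)]
        by_cases h4 : t + 2 = conjPart γ j
        · rw [if_pos (by omega : t + 1 + 1 = conjPart γ j), if_pos (by omega : t + 1 < conjPart γ j)]
          have hpos : j < γ (t + 1) := (lt_conj_iff γ hA hN j (t+1)).mpr (by omega)
          omega
        · rw [if_neg (by omega : ¬ t + 1 + 1 = conjPart γ j)]
          by_cases h5 : t + 1 = conjPart γ j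
          · rw [if_pos h5, if_neg (by omega : ¬ t + 1 < conjPart γ j)]
            have : ¬ j < γ (t + 1) := fun h => (by omega : ¬ t + 1 < conjPart γ j) ((lt_conj_iff γ hA hN j (t+1)).mp h)
            omega
          · rw [if_neg (by omega : ¬ t + 1 < conjPart γ j), if_neg h5]
            exact hA (by omega)

lemma rh_support : ∀ t : ℕ, N ≤ t → removeHook γ i j t = 0 := by
  intro t ht
  have hcN : conjPart γ j ≤ N := (conj_set γ hA hN j).2
  have hic : i < conjPart γ j := (lt_conj_iff γ hA hN j i).mp hj
  unfold removeHook
  rw [if_neg (by omega : ¬ t < i), if_neg (by omega : ¬ t + 1 < conjPart γ j),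
    if_neg (by omega : ¬ t + 1 = conjPart γ j)]
  exact hN t ht

end RH

lemma main_ind (N x U : ℕ) (hNx : N ≤ x) (hxU : x ≤ U) :
    ∀ L : List ℕ, L.Pairwise (· ≥ ·) → x ∈ L →
      ∀ γ : ℕ → ℕ, Antitone γ → (∀ t, N ≤ t → γ t = 0) →
        (∀ i : ℕ, (γ i : ℤ) - i ≤ (x : ℤ)) →
        (∀ i e : ℕ, x ≤ e → e ≤ U →
          ((γ i : ℤ) - i - e ≤ (x : ℤ) - N ∧ ∃ t : ℕ, (γ t : ℤ) - t = (γ i : ℤ) - i - e)) →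
        charValue γ L = 0 := by
  intro L
  induction L with
  | nil => intro _ hmem; exact absurd hmem List.not_mem_nil
  | cons b rest ih =>
    intro hsort hmem γ hA hN hbd hInv
    obtain ⟨hball, hsrest⟩ := List.pairwise_cons.mp hsort
    have hbx : x ≤ b := by
      rcases List.mem_cons.mp hmem with h | h
      · omega
      · exact hball x h
    rw [charValue]
    apply myfinsum_eq_zero; intro i
    apply myfinsum_eq_zero; intro j
    by_cases hcond : j < γ i ∧ hookLen γ i j = b
    swap
    · rw [if_neg hcond]
    rw [if_pos hcond]
    obtain ⟨hj, hhook⟩ := hcond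
    have hgap := gap_not_mem γ hA hN j
    have hcast := hook_cast γ hA hN hj
    rw [hhook] at hcast
    by_cases hbU : b ≤ U
    · exfalso
      obtain ⟨-, t, ht⟩ := hInv i b hbx hbU
      exact hgap t (by omega)
    · push_neg at hbU
      have hxrest : x ∈ rest := by
        rcases List.mem_cons.mp hmem with h | h
        · omega
        · exact h
      have hdibig : (b : ℤ) - N < (γ i : ℤ) - i := by
        by_contra h
        push_neg at h
        obtain ⟨t, ht⟩ := ray_mem γ hN ((γ i : ℤ) - i - b) (by omega)
        exact hgap t (by omega)
      have hz : charValue (removeHook γ i j) rest = 0 := by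
        apply ih hsrest hxrest
        · exact rh_antitone γ hA hN hj
        · exact rh_support γ hA hN hj
        · intro t
          rcases rh_vals γ hA hN hj t with h | ⟨s, -, h⟩
          · rw [h]
            have := hbd i
            omega
          · rw [h]; exact hbd s
        · intro t e hxe heU
          rcases rh_vals γ hA hN hj t with h | ⟨s, hsi, h⟩
          · rw [h]
            have hbdi := hbd i
            have hv : (j : ℤ) - conjPart γ j + 1 - e ≤ -(N : ℤ) := by omega
            constructor
            · omega
            · exact ray_mem (removeHook γ i j) (rh_support γ hA hN hj) _ hv
          · rw [h]
            obtain ⟨hb1, t', ht'⟩ := hInv s e hxe heU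
            refine ⟨hb1, ?_⟩
            have ht'i : t' ≠ i := by
              intro hti
              rw [hti] at ht'
              omega
            obtain ⟨t'', ht''⟩ := rh_old_vals γ hA hN hj t' ht'i
            exact ⟨t'', by omega⟩
      rw [hz, mul_zero]

lemma conj_dual (γ : ℕ → ℕ) (hA : Antitone γ) (hsc : conjPart γ = γ) :
    ∀ v : ℤ, (∀ t : ℕ, (γ t : ℤ) - t ≠ v) → ∃ t : ℕ, (γ t : ℤ) - t = 1 - v := by
  intro v hv
  have hfin : {i : ℕ | v < (γ i : ℤ) - i}.Finite := by
    apply Set.Finite.subset (Set.finite_Iio ((γ 0 : ℤ) - v).toNat)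
    intro t ht
    simp only [Set.mem_setOf_eq] at ht
    have h0 : γ t ≤ γ 0 := hA (Nat.zero_le t)
    simp only [Set.mem_Iio]
    omega
  have hdc : ∀ a b : ℕ, a ≤ b → b ∈ {i : ℕ | v < (γ i : ℤ) - i} →
      a ∈ {i : ℕ | v < (γ i : ℤ) - i} := by
    intro a b hab hb
    simp only [Set.mem_setOf_eq] at *
    have := hA hab
    omega
  have hIio := dc_eq_Iio _ hfin hdc
  set c := {i : ℕ | v < (γ i : ℤ) - i}.ncard with hc
  have hiff : ∀ t : ℕ, v < (γ t : ℤ) - t ↔ t < c := by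
    intro t
    have := Set.ext_iff.mp hIio t
    simpa using this
  have hc2 : ∀ t : ℕ, c ≤ t → (γ t : ℤ) - t ≤ v - 1 := by
    intro t ht
    have h1 : ¬ v < (γ t : ℤ) - t := fun h => by have := (hiff t).mp h; omega
    have h2 := hv t
    omega
  have hj0 : 0 ≤ v + c - 1 := by
    have := hc2 c le_rfl
    have h0 : (0 : ℤ) ≤ (γ c : ℤ) := by positivity
    omega
  set jn := (v + (c : ℤ) - 1).toNat with hjndef
  have hjn : (jn : ℤ) = v + c - 1 := Int.toNat_of_nonneg hj0
  have hset : {t : ℕ | jn < γ t} = Set.Iio c := by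
    ext t
    simp only [Set.mem_setOf_eq, Set.mem_Iio]
    constructor
    · intro h
      by_contra hct
      push_neg at hct
      have h1 : γ t ≤ γ c := hA hct
      have h2 := hc2 c le_rfl
      omega
    · intro ht
      have hc1 : c - 1 < c := by omega
      have h1 : γ (c - 1) ≤ γ t := hA (by omega)
      have h2 : v < (γ (c - 1) : ℤ) - (c - 1 : ℕ) := (hiff (c - 1)).mpr hc1
      have h3 : ((c - 1 : ℕ) : ℤ) = (c : ℤ) - 1 := by omega
      omega
  have hconj : conjPart γ jn = c := by
    show Set.ncard {i : ℕ | jn < γ i} = c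
    rw [hset, ← Finset.coe_Iio, Set.ncard_coe_finset, Nat.card_Iio]
  have hγ : γ jn = c := by rw [← congrFun hsc jn, hconj]
  refine ⟨jn, ?_⟩
  rw [hγ]
  omega


/-- For a self-conjugate `α` with at least two distinct part sizes `r₁ > r₂` (with `r₁`
of multiplicity `k₁`): if `β` has a part `x` with
`max (2(r₂ - k₁)) (r₁ + r₂ - k₁) ≤ x ≤ 2(r₁ - k₁)`, then `χ^α(β) = 0`. -/
theorem stmt_15 (n : ℕ) (α : ℕ → ℕ) (hα : IsPartitionFun α n) (hsc : conjPart α = α)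
    (β : List ℕ) (hβ : IsPartitionList β n)
    (r1 k1 r2 : ℕ)
    (hr1 : r1 = α 0) (hk1 : k1 = Set.ncard {t | α t = α 0}) (hr2 : r2 = α k1)
    (hm2 : 0 < r2 ∧ r2 < r1)
    (x : ℕ) (hx : x ∈ β)
    (h1 : max (2 * (r2 - k1)) (r1 + r2 - k1) ≤ x) (h2 : x ≤ 2 * (r1 - k1)) :
    charValue α β = 0 := by
  obtain ⟨hA, hfin, -⟩ := hα
  obtain ⟨hm21, hm22⟩ := hm2
  have hr1pos : 0 < r1 := by omega
  have top : ∀ t, α t ≤ r1 := fun t => hr1 ▸ hA (Nat.zero_le t)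
  -- the set of positive rows is Iio r1
  have hS0 : {t : ℕ | 0 < α t} = Set.Iio r1 := by
    have hfin0 : {t : ℕ | 0 < α t}.Finite := by
      apply hfin.subset
      intro t ht
      simp only [Set.mem_setOf_eq] at ht
      simp only [Function.mem_support]
      omega
    have hdc0 : ∀ a b : ℕ, a ≤ b → b ∈ {t : ℕ | 0 < α t} → a ∈ {t : ℕ | 0 < α t} := by
      intro a b hab hb
      simp only [Set.mem_setOf_eq] at *
      have := hA hab
      omega
    have heq := dc_eq_Iio _ hfin0 hdc0
    have hc0 : conjPart α 0 = α 0 := congrFun hsc 0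
    have hcc : {t : ℕ | 0 < α t}.ncard = r1 := by
      have : conjPart α 0 = Set.ncard {i : ℕ | 0 < α i} := rfl
      omega
    rw [← hcc]
    exact heq
  have supp0 : ∀ t, r1 ≤ t → α t = 0 := by
    intro t ht
    by_contra h
    have : t ∈ Set.Iio r1 := hS0 ▸ (by simp only [Set.mem_setOf_eq]; omega : t ∈ {t : ℕ | 0 < α t})
    simp only [Set.mem_Iio] at this
    omega
  -- the set of maximal rows is Iio k1
  have hK : {t : ℕ | α t = α 0} = Set.Iio k1 := by
    have hfinK : {t : ℕ | α t = α 0}.Finite := by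
      apply (Set.finite_Iio r1).subset
      intro t ht
      simp only [Set.mem_setOf_eq] at ht
      simp only [Set.mem_Iio]
      by_contra h
      have := supp0 t (by omega)
      omega
    have hdcK : ∀ a b : ℕ, a ≤ b → b ∈ {t : ℕ | α t = α 0} → a ∈ {t : ℕ | α t = α 0} := by
      intro a b hab hb
      simp only [Set.mem_setOf_eq] at *
      have h1 := hA hab
      have h2 := hA (Nat.zero_le a)
      omega
    have := dc_eq_Iio _ hfinK hdcK
    rw [← hk1] at this
    exact this
  have part_eq : ∀ i, i < k1 → α i = r1 := by
    intro i hi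
    have : i ∈ {t : ℕ | α t = α 0} := hK ▸ (by simpa using hi : i ∈ Set.Iio k1)
    simp only [Set.mem_setOf_eq] at this
    omega
  have part_le : ∀ i, k1 ≤ i → α i ≤ r2 := fun i hi => hr2 ▸ hA hi
  have hk1r1 : k1 < r1 := by
    have : k1 ∈ Set.Iio r1 := hS0 ▸ (by simp only [Set.mem_setOf_eq]; omega : k1 ∈ {t : ℕ | 0 < α t})
    simpa using this
  have hk2 : k1 ≤ r2 := by
    have hcol : conjPart α (r1 - 1) = k1 := by
      have hsets : {t : ℕ | r1 - 1 < α t} = {t : ℕ | α t = α 0} := by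
        ext t
        simp only [Set.mem_setOf_eq]
        have := top t
        omega
      have : conjPart α (r1 - 1) = Set.ncard {i : ℕ | r1 - 1 < α i} := rfl
      rw [this, hsets, ← hk1]
    have h1 : α (r1 - 1) = k1 := by rw [← congrFun hsc (r1 - 1), hcol]
    have h2 : α (r1 - 1) ≤ α k1 := hA (by omega)
    omega
  have hx1 : r1 + r2 - k1 ≤ x := le_trans (le_max_right _ _) h1
  have hxge : (r1 : ℤ) + r2 - k1 ≤ x := by omega
  have hNx : r1 ≤ x := by omega
  refine main_ind r1 x (2 * (r1 - k1)) hNx h2 β hβ.1 hx α hA supp0 ?_ ?_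
  · intro i
    by_cases hi : i < k1
    · have := part_eq i hi
      omega
    · have := part_le i (by omega)
      omega
  · intro i e hxe heU
    by_cases hi : i < k1
    · have hai : α i = r1 := part_eq i hi
      constructor
      · omega
      · have hvnot : ∀ t : ℕ, (α t : ℤ) - t ≠ 1 - ((α i : ℤ) - i - e) := by
          intro t heq
          rw [hai] at heq
          by_cases ht : t < k1
          · have := part_eq t ht
            omega
          · have h1 : α t ≤ r2 := part_le t (by omega)
            omega
        obtain ⟨t, ht⟩ := conj_dual α hA hsc _ hvnot
        exact ⟨t, by omega⟩
    · have h1 : α i ≤ r2 := part_le i (by omega)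
      have hvray : (α i : ℤ) - i - e ≤ -(r1 : ℤ) := by omega
      exact ⟨by omega, ray_mem α supp0 _ hvray⟩
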